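/- In a 2-HOCA without zero-test, if k₀ satisfies Ret_{k₀}((σ,i)) = Ret_{k₀+1}((σ,i)) for all σ ∈ Σ and all i ∈ ℕ, then Ret_k((σ,i)) = Ret_{k₀}((σ,i)) for all k ≥ k₀, all σ, and all i (returns stabilize in the height bound once they stop growing). -/

import Mathlib

/-!  Level-2 higher-order counter automata without zero-test (2-HOCA).
Storage configurations are nonempty lists in `(Sig × ℕ)`, head = topmost entry. -/

namespace HOCA

/-- Operations of a 2-HOCA without zero-test: level-2 pop, level-2 push
(duplicating the topmost counter under a new symbol), increment of the
topmost counter (`stay(push⊥)`), decrement of the topmost counter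
(`stay(pop)`, undefined at 0), and the identity. -/
inductive HOp (Sig : Type) where
  | pop : HOp Sig
  | push (τ : Sig) : HOp Sig
  | inc : HOp Sig
  | dec : HOp Sig
  | id : HOp Sig

/-- Partial application of an operation to a storage. -/
def applyOp {Sig : Type} : HOp Sig → List (Sig × ℕ) → Option (List (Sig × ℕ))
  | .pop, _ :: t :: s => some (t :: s)
  | .pop, _ => none
  | .push τ, (σ, n) :: s => some ((τ, n) :: (σ, n) :: s)
  | .push _, [] => none
  | .inc, (σ, n) :: s => some ((σ, n + 1) :: s)
  | .inc, [] => none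
  | .dec, (σ, n + 1) :: s => some ((σ, n) :: s)
  | .dec, _ => none
  | .id, s => some s

/-- A 2-HOCA without zero-test: a transition relation; a transition
`Δ q σ op q'` is applicable in state `q` when the topmost symbol is `σ`
(the only tests are top-symbol tests). -/
structure Aut (Q Sig : Type) where
  Δ : Q → Sig → HOp Sig → Q → Prop

abbrev Config (Q Sig : Type) := Q × List (Sig × ℕ)

/-- `IsRun A L cfg lab` : the configurations `cfg 0, …, cfg L` form a run of `A`,
where the `i`-th step tests top-symbol `(lab i).1` and applies operation `(lab i).2`. -/
def IsRun {Q Sig : Type} (A : Aut Q Sig) (L : ℕ) (cfg : ℕ → Config Q Sig)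
    (lab : ℕ → Sig × HOp Sig) : Prop :=
  ∀ i < L, ∃ (n : ℕ) (rest : List (Sig × ℕ)),
    (cfg i).2 = ((lab i).1, n) :: rest ∧
    A.Δ (cfg i).1 (lab i).1 (lab i).2 (cfg (i + 1)).1 ∧
    applyOp (lab i).2 (cfg i).2 = some (cfg (i + 1)).2

/-- The run increases the height by at most `k` (for `k = ⊤`: no bound). -/
def heightBounded {Q Sig : Type} (k : ℕ∞) (L : ℕ) (cfg : ℕ → Config Q Sig) : Prop :=
  ∀ i ≤ L, ((cfg i).2.length : ℕ∞) ≤ ((cfg 0).2.length : ℕ∞) + k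

/-- `Ret_k((σ,m))` : pairs `(q,q')` such that there is a return from
`(q, (σ,m)·s)` to `(q', s)` increasing the height by at most `k`
(the final configuration is the first one whose storage is `s`). -/
def RetSet {Q Sig : Type} (A : Aut Q Sig) (k : ℕ∞) (σ : Sig) (m : ℕ) :
    Set (Q × Q) :=
  { p | ∃ (s : List (Sig × ℕ)) (L : ℕ) (cfg : ℕ → Config Q Sig)
      (lab : ℕ → Sig × HOp Sig),
      s ≠ [] ∧ IsRun A L cfg lab ∧
      cfg 0 = (p.1, (σ, m) :: s) ∧ cfg L = (p.2, s) ∧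
      (∀ i < L, (cfg i).2 ≠ s) ∧ heightBounded k L cfg }

/-- `Loop_k((σ,m))` : pairs `(q,q')` such that there is a loop from
`(q, (σ,m)·s)` to `(q', (σ,m)·s)` never visiting storage `s`,
increasing the height by at most `k`. -/
def LoopSet {Q Sig : Type} (A : Aut Q Sig) (k : ℕ∞) (σ : Sig) (m : ℕ) :
    Set (Q × Q) :=
  { p | ∃ (s : List (Sig × ℕ)) (L : ℕ) (cfg : ℕ → Config Q Sig)
      (lab : ℕ → Sig × HOp Sig),
      IsRun A L cfg lab ∧
      cfg 0 = (p.1, (σ, m) :: s) ∧ cfg L = (p.2, (σ, m) :: s) ∧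
      (∀ i ≤ L, (cfg i).2 ≠ s) ∧ heightBounded k L cfg }

end HOCA

namespace HOCA

variable {Q Sig : Type}

/-- One step of the automaton. -/
def Step (A : Aut Q Sig) (c d : Config Q Sig) : Prop :=
  ∃ σ op n rest, c.2 = (σ, n) :: rest ∧ A.Δ c.1 σ op d.1 ∧ applyOp op c.2 = some d.2

lemma append_ne_self {α : Type*} {x s : List α} (hx : x ≠ []) : x ++ s ≠ s := by
  intro h
  apply hx
  have := congrArg List.length h
  simp only [List.length_append] at this
  exact List.length_eq_zero_iff.mp (by omega)

lemma cons_ne_self' {α : Type*} (a : α) (s : List α) : a :: s ≠ s :=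
  append_ne_self (x := [a]) (by simp)

lemma step_transport {A : Aut Q Sig} {c d : Config Q Sig} {s s' x : List (Sig × ℕ)}
    (h : Step A c d) (hc : c.2 = x ++ s) (hx : x ≠ []) (hs' : s' ≠ []) :
    ∃ x', d.2 = x' ++ s ∧ Step A (c.1, x ++ s') (d.1, x' ++ s') := by
  obtain ⟨σ, op, n, rest, htop, hΔ, happ⟩ := h
  obtain ⟨⟨σ₁, n₁⟩, x₁, rfl⟩ : ∃ a x₁, x = a :: x₁ := by
    cases x with
    | nil => exact absurd rfl hx
    | cons a x₁ => exact ⟨a, x₁, rfl⟩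
  rw [hc] at htop happ
  obtain ⟨⟨rfl, rfl⟩, hrest⟩ : ((σ₁ = σ ∧ n₁ = n) ∧ x₁ ++ s = rest) := by
    simpa [Prod.ext_iff] using htop
  obtain ⟨t', u', rfl⟩ : ∃ t' u', s' = t' :: u' := by
    cases s' with
    | nil => exact absurd rfl hs'
    | cons t' u' => exact ⟨t', u', rfl⟩
  cases op with
  | pop =>
    cases x₁ with
    | nil =>
      cases s with
      | nil => simp [applyOp] at happ
      | cons e s₄ =>
        simp only [List.nil_append, applyOp, List.cons_append] at happ ⊢
        refine ⟨[], by simpa using happ.symm, σ₁, .pop, n₁, _, rfl, hΔ, ?_⟩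
        simp [applyOp]
    | cons b x₂ =>
      simp only [applyOp, List.cons_append] at happ ⊢
      exact ⟨b :: x₂, by simpa using happ.symm, σ₁, .pop, n₁, _, rfl, hΔ, by simp [applyOp]⟩
  | push τ =>
    simp only [applyOp, List.cons_append] at happ ⊢
    exact ⟨(τ, n₁) :: (σ₁, n₁) :: x₁, by simpa using happ.symm, σ₁, .push τ, n₁, _, rfl, hΔ,
      by simp [applyOp]⟩
  | inc =>
    simp only [applyOp, List.cons_append] at happ ⊢
    exact ⟨(σ₁, n₁ + 1) :: x₁, by simpa using happ.symm, σ₁, .inc, n₁, _, rfl, hΔ,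
      by simp [applyOp]⟩
  | dec =>
    cases n₁ with
    | zero => simp [applyOp] at happ
    | succ n' =>
      simp only [applyOp, List.cons_append] at happ ⊢
      exact ⟨(σ₁, n') :: x₁, by simpa using happ.symm, σ₁, .dec, n' + 1, _, rfl, hΔ,
        by simp [applyOp]⟩
  | id =>
    simp only [applyOp, List.cons_append] at happ ⊢
    exact ⟨(σ₁, n₁) :: x₁, by simpa using happ.symm, σ₁, .id, n₁, _, rfl, hΔ, by simp [applyOp]⟩

/-- Transport a run over base `s` to the same run over base `s'`. -/
lemma transport {A : Aut Q Sig} {s s' : List (Sig × ℕ)} (hs' : s' ≠ []) :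
    ∀ (cs : List (Config Q Sig)) (x₀ : List (Sig × ℕ)) (c₀ : Config Q Sig),
    cs.Chain' (Step A) → cs.head? = some c₀ → c₀.2 = x₀ ++ s →
    (∀ c ∈ cs.dropLast, c.2 ≠ s) →
    ∃ ds, ds.Chain' (Step A) ∧
      List.Forall₂ (fun c d : Config Q Sig =>
        c.1 = d.1 ∧ ∃ x, c.2 = x ++ s ∧ d.2 = x ++ s') cs ds := by
  intro cs
  induction cs with
  | nil => intro x₀ c₀ _ h; simp at h
  | cons c t ih =>
    intro x₀ c₀ hch hh hc₀ hmid
    obtain rfl : c₀ = c := by simpa using hh.symm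
    cases t with
    | nil =>
      exact ⟨[(c₀.1, x₀ ++ s')], List.isChain_singleton _, by
        refine List.Forall₂.cons ⟨rfl, x₀, hc₀, rfl⟩ List.Forall₂.nil⟩
    | cons c' t' =>
      have hcne : c₀.2 ≠ s := hmid c₀ (by simp)
      have hx₀ : x₀ ≠ [] := by rintro rfl; exact hcne hc₀
      rw [List.Chain', List.isChain_cons_cons] at hch
      obtain ⟨x', hc', hstep'⟩ := step_transport hch.1 hc₀ hx₀ hs'
      obtain ⟨ds', hch', hF⟩ := ih x' c' hch.2 rfl hc' (fun d hd => hmid d (by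
        simp only [List.dropLast_cons₂, List.mem_cons] at hd ⊢
        exact Or.inr hd))
      cases hF with
      | @cons _ d' _ ds'' hd' hFtail =>
        obtain ⟨hd1, x'', hcx, hdx⟩ := hd'
        obtain rfl : x' = x'' := by
          have := hcx.symm.trans hc'
          exact (List.append_inj' this rfl).1.symm
        have hd'eq : d' = (c'.1, x' ++ s') := by
          cases d'; simp at hd1 hdx; exact Prod.ext hd1.symm hdx
        refine ⟨(c₀.1, x₀ ++ s') :: d' :: ds'', ?_, ?_⟩
        · rw [List.Chain', List.isChain_cons_cons]
          exact ⟨hd'eq ▸ hstep', hch'⟩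
        · exact List.Forall₂.cons ⟨rfl, x₀, hc₀, rfl⟩ (List.Forall₂.cons ⟨hd1, x', hcx, hdx⟩ hFtail)

lemma head?_eq_get' {α : Type*} {l : List α} (h : 0 < l.length) :
    l.head? = some (l.get ⟨0, h⟩) := by
  cases l with
  | nil => simp at h
  | cons a t => simp

lemma getLast?_eq_get' {α : Type*} {l : List α} (h : 0 < l.length) :
    l.getLast? = some (l.get ⟨l.length - 1, by omega⟩) := by
  rw [List.getLast?_eq_getElem?, List.getElem?_eq_getElem (by omega)]
  simp

lemma mem_dropLast_iff_get {α : Type*} {l : List α} {a : α} :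
    a ∈ l.dropLast ↔ ∃ (i : ℕ) (h : i < l.length - 1), l.get ⟨i, by omega⟩ = a := by
  rw [List.mem_iff_get]
  constructor
  · rintro ⟨⟨i, hi⟩, rfl⟩
    have hi' : i < l.length - 1 := by simpa [List.length_dropLast] using hi
    exact ⟨i, hi', by simp [List.get_eq_getElem, List.getElem_dropLast]⟩
  · rintro ⟨i, hi, rfl⟩
    refine ⟨⟨i, by simpa [List.length_dropLast] using hi⟩, ?_⟩
    simp [List.get_eq_getElem, List.getElem_dropLast]

lemma transport_ret {A : Aut Q Sig} {s s' : List (Sig × ℕ)} (hs' : s' ≠ [])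
    {cs : List (Config Q Sig)} {q₁ q₂ : Q} {a : Sig × ℕ} {k : ℕ}
    (hch : cs.Chain' (Step A)) (hh : cs.head? = some (q₁, a :: s))
    (hl : cs.getLast? = some (q₂, s)) (hmid : ∀ c ∈ cs.dropLast, c.2 ≠ s)
    (hb : ∀ c ∈ cs, c.2.length ≤ s.length + 1 + k) :
    ∃ ds : List (Config Q Sig), ds.Chain' (Step A) ∧ ds.head? = some (q₁, a :: s') ∧
      ds.getLast? = some (q₂, s') ∧ (∀ d ∈ ds, s'.length ≤ d.2.length) ∧
      (∀ d ∈ ds.dropLast, d.2 ≠ s') ∧ (∀ d ∈ ds, d.2.length ≤ s'.length + 1 + k) := by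
  obtain ⟨ds, hch', hF⟩ := transport hs' cs [a] (q₁, a :: s) hch hh rfl hmid
  rw [List.forall₂_iff_get] at hF
  obtain ⟨hlen, hget⟩ := hF
  have hcs0 : 0 < cs.length := by
    cases cs with
    | nil => simp at hh
    | cons _ _ => simp
  have hds0 : 0 < ds.length := hlen ▸ hcs0
  have hRmem : ∀ d ∈ ds, ∃ (i : ℕ) (hi : i < cs.length),
      (cs.get ⟨i, hi⟩).1 = d.1 ∧ ∃ x, (cs.get ⟨i, hi⟩).2 = x ++ s ∧ d.2 = x ++ s' := by
    intro d hd
    obtain ⟨⟨i, hi⟩, rfl⟩ := List.mem_iff_get.mp hd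
    exact ⟨i, hlen ▸ hi, hget i (hlen ▸ hi) hi⟩
  refine ⟨ds, hch', ?_, ?_, ?_, ?_, ?_⟩
  · -- head
    rw [head?_eq_get' hds0]
    obtain ⟨h1, x, hx1, hx2⟩ := hget 0 hcs0 hds0
    rw [head?_eq_get' hcs0] at hh
    have hcseq : cs.get ⟨0, hcs0⟩ = (q₁, a :: s) := by simpa using hh
    rw [hcseq] at h1 hx1
    obtain rfl : x = [a] := by
      have : x ++ s = [a] ++ s := hx1.symm
      exact (List.append_inj' this rfl).1
    have : ds.get ⟨0, hds0⟩ = (q₁, a :: s') := Prod.ext h1.symm (by simpa using hx2)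
    rw [this]
  · -- last
    rw [getLast?_eq_get' hds0]
    have hll : cs.length - 1 < cs.length := by omega
    have hll' : ds.length - 1 < ds.length := by omega
    obtain ⟨h1, x, hx1, hx2⟩ := hget (cs.length - 1) hll (by omega)
    rw [getLast?_eq_get' hcs0] at hl
    have hcseq : cs.get ⟨cs.length - 1, hll⟩ = (q₂, s) := by simpa using hl
    rw [hcseq] at h1 hx1
    obtain rfl : x = [] := by
      have : x ++ s = [] ++ s := by simpa using hx1.symm
      exact (List.append_inj' this rfl).1
    have hds : ds.get ⟨ds.length - 1, hll'⟩ = (q₂, s') := by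
      have := hget (cs.length - 1) hll (by omega)
      rw [hcseq] at this
      obtain ⟨g1, y, gy1, gy2⟩ := this
      obtain rfl : y = [] := by
        have : y ++ s = [] ++ s := by simpa using gy1.symm
        exact (List.append_inj' this rfl).1
      have : (⟨ds.length - 1, hll'⟩ : Fin ds.length) = ⟨cs.length - 1, by omega⟩ := by
        simp [hlen]
      rw [this]
      exact Prod.ext g1.symm (by simpa using gy2)
    rw [hds]
  · -- length lower bound
    intro d hd
    obtain ⟨i, hi, _, x, hx1, hx2⟩ := hRmem d hd
    simp [hx2]
  · -- middle ≠ s'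
    intro d hd
    obtain ⟨i, hi, rfl⟩ := mem_dropLast_iff_get.mp hd
    have hi2 : i < cs.length - 1 := by omega
    have hcmem : cs.get ⟨i, by omega⟩ ∈ cs.dropLast :=
      mem_dropLast_iff_get.mpr ⟨i, hi2, rfl⟩
    have hne := hmid _ hcmem
    obtain ⟨h1, x, hx1, hx2⟩ := hget i (by omega) (by omega)
    have hx : x ≠ [] := by rintro rfl; exact hne (by simpa using hx1)
    rw [hx2]
    exact append_ne_self hx
  · -- heights
    intro d hd
    obtain ⟨i, hi, _, x, hx1, hx2⟩ := hRmem d hd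
    have := hb _ (List.get_mem cs ⟨i, hi⟩)
    rw [hx1] at this
    simp only [List.length_append] at this
    rw [hx2]
    simp only [List.length_append]
    omega

lemma chain'_glue {α : Type*} {R : α → α → Prop} {l₁ l₂ : List α} {a : α}
    (h₁ : List.Chain' R l₁) (h₂ : List.Chain' R l₂)
    (hl : l₁.getLast? = some a) (hh : l₂.head? = some a) :
    List.Chain' R (l₁ ++ l₂.tail) := by
  cases l₂ with
  | nil => simp at hh
  | cons b t =>
    obtain rfl : a = b := by simpa using hh.symm
    rw [List.Chain', List.isChain_cons] at h₂
    rw [List.Chain', List.isChain_append]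
    refine ⟨h₁, h₂.2, ?_⟩
    intro x hx y hy
    rw [hl] at hx
    obtain rfl : a = x := by simpa using hx
    exact h₂.1 y hy

lemma split_at_base {A : Aut Q Sig} {s₂ : List (Sig × ℕ)} (hs₂ : s₂ ≠ []) :
    ∀ (cs : List (Config Q Sig)) (x₀ : List (Sig × ℕ)) (c₀ cl : Config Q Sig),
    cs.Chain' (Step A) → cs.head? = some c₀ → c₀.2 = x₀ ++ s₂ → x₀ ≠ [] →
    cs.getLast? = some cl → cl.2.length < s₂.length →
    ∃ as p₂ bs, cs = as ++ (p₂, s₂) :: bs ∧ as ≠ [] ∧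
      ∀ c ∈ as, ∃ x, x ≠ [] ∧ c.2 = x ++ s₂ := by
  intro cs
  induction cs with
  | nil => intro x₀ c₀ cl _ h; simp at h
  | cons c t ih =>
    intro x₀ c₀ cl hch hh hc₀ hx₀ hl hlen
    obtain rfl : c₀ = c := by simpa using hh.symm
    cases t with
    | nil =>
      obtain rfl : cl = c₀ := by simpa using hl.symm
      rw [hc₀] at hlen
      simp only [List.length_append] at hlen
      omega
    | cons c' t' =>
      rw [List.Chain', List.isChain_cons_cons] at hch
      obtain ⟨x', hc', -⟩ := step_transport hch.1 hc₀ hx₀ hs₂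
      cases x' with
      | nil =>
        refine ⟨[c₀], c'.1, t', ?_, by simp, ?_⟩
        · have : c' = (c'.1, s₂) := Prod.ext rfl (by simpa using hc')
          rw [← this]; rfl
        · intro c hc
          obtain rfl : c = c₀ := by simpa using hc
          exact ⟨x₀, hx₀, hc₀⟩
      | cons b x₂ =>
        obtain ⟨as, p₂, bs, heq, hane, hmem⟩ :=
          ih (b :: x₂) c' cl hch.2 rfl hc' (by simp)
            (by rwa [List.getLast?_cons_cons] at hl) hlen
        exact ⟨c₀ :: as, p₂, bs, by rw [heq, List.cons_append], by simp,
          fun c hc => by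
            rcases List.mem_cons.mp hc with rfl | hc
            · exact ⟨x₀, hx₀, hc₀⟩
            · exact hmem c hc⟩

lemma list_of_mem_retset {A : Aut Q Sig} {k : ℕ} {σ : Sig} {m : ℕ} {p : Q × Q}
    (h : p ∈ RetSet A (k : ℕ∞) σ m) :
    ∃ (s : List (Sig × ℕ)) (cs : List (Config Q Sig)), s ≠ [] ∧
      cs.Chain' (Step A) ∧ cs.head? = some (p.1, (σ, m) :: s) ∧
      cs.getLast? = some (p.2, s) ∧ (∀ c ∈ cs.dropLast, c.2 ≠ s) ∧
      ∀ c ∈ cs, c.2.length ≤ s.length + 1 + k := by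
  obtain ⟨s, L, cfg, lab, hs, hrun, h0, hL, hmidC, hhb⟩ := h
  refine ⟨s, (List.range (L + 1)).map cfg, hs, ?_, ?_, ?_, ?_, ?_⟩
  · rw [List.Chain', List.isChain_map]
    rw [show L + 1 = L.succ from rfl, List.isChain_range_succ]
    intro i hi
    obtain ⟨n, rest, h1, h2, h3⟩ := hrun i hi
    exact ⟨(lab i).1, (lab i).2, n, rest, h1, h2, h3⟩
  · rw [List.head?_map, show L + 1 = L.succ from rfl, List.range_succ_eq_map]
    simp [h0]
  · rw [show L + 1 = L.succ from rfl, List.range_succ, List.map_append]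
    simp [hL]
  · rw [show L + 1 = L.succ from rfl, List.range_succ, List.map_append,
      show List.map cfg [L] = [cfg L] from rfl, List.dropLast_concat]
    intro c hc
    obtain ⟨i, hi, rfl⟩ := List.mem_map.mp hc
    exact hmidC i (List.mem_range.mp hi)
  · intro c hc
    obtain ⟨i, hi, rfl⟩ := List.mem_map.mp hc
    have hi' : i ≤ L := by
      have := List.mem_range.mp hi
      omega
    have := hhb i hi'
    rw [h0] at this
    have hgoal : (cfg i).2.length ≤ ((σ, m) :: s).length + k := by exact_mod_cast this
    simpa using hgoal

lemma mem_retset_of_list {A : Aut Q Sig} {k : ℕ} {σ : Sig} {m : ℕ} {q q' : Q}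
    {s : List (Sig × ℕ)} {cs : List (Config Q Sig)}
    (hs : s ≠ []) (hch : cs.Chain' (Step A)) (hh : cs.head? = some (q, (σ, m) :: s))
    (hl : cs.getLast? = some (q', s)) (hmid : ∀ c ∈ cs.dropLast, c.2 ≠ s)
    (hb : ∀ c ∈ cs, c.2.length ≤ s.length + 1 + k) :
    (q, q') ∈ RetSet A (k : ℕ∞) σ m := by
  classical
  have hcs0 : 0 < cs.length := by
    cases cs with
    | nil => simp at hh
    | cons _ _ => simp
  set L := cs.length - 1 with hLdef
  have hstep : ∀ i, i < L → Step A (cs.getD i (q', s)) (cs.getD (i + 1) (q', s)) := by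
    intro i hi
    have h1 : i < cs.length := by omega
    have h2 : i + 1 < cs.length := by omega
    rw [List.getD_eq_getElem?_getD, List.getElem?_eq_getElem h1,
        List.getD_eq_getElem?_getD, List.getElem?_eq_getElem h2]
    simpa using List.isChain_iff_getElem.mp hch i (by omega)
  have hcfg0 : cs.getD 0 (q', s) = (q, (σ, m) :: s) := by
    cases cs with
    | nil => simp at hh
    | cons c t => simpa using hh
  have hcfgL : cs.getD L (q', s) = (q', s) := by
    rw [List.getD_eq_getElem?_getD, List.getElem?_eq_getElem (by omega)]
    rw [List.getLast?_eq_getElem?] at hl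
    rw [List.getElem?_eq_getElem (by omega)] at hl
    simpa using hl
  refine ⟨s, L, fun i => cs.getD i (q', s),
    fun i => if h : i < L then ((hstep i h).choose, (hstep i h).choose_spec.choose)
      else (σ, HOp.id), hs, ?_, ?_, ?_, ?_, ?_⟩
  · intro i hi
    simp only [dif_pos hi]
    exact (hstep i hi).choose_spec.choose_spec
  · exact hcfg0
  · exact hcfgL
  · intro i hi
    have h1 : i < cs.length := by omega
    show (cs.getD i (q', s)).2 ≠ s
    rw [List.getD_eq_getElem?_getD, List.getElem?_eq_getElem h1]
    have : cs[i] ∈ cs.dropLast := by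
      apply mem_dropLast_iff_get.mpr
      exact ⟨i, by omega, by simp [List.get_eq_getElem]⟩
    simpa using hmid _ this
  · intro i hi
    have h1 : i < cs.length := by omega
    have hmem : cs.getD i (q', s) ∈ cs := by
      rw [List.getD_eq_getElem?_getD, List.getElem?_eq_getElem h1]
      simp [List.getElem_mem]
    have := hb _ hmem
    show ((cs.getD i (q', s)).2.length : ℕ∞) ≤ ((cs.getD 0 (q', s)).2.length : ℕ∞) + (k : ℕ∞)
    rw [hcfg0]
    have hgoal : (cs.getD i (q', s)).2.length ≤ ((σ, m) :: s).length + k := by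
      simpa using this
    exact_mod_cast hgoal

lemma ne_of_length_gt' {c : List (Sig × ℕ)} {s : List (Sig × ℕ)}
    (h : s.length < c.length) : c ≠ s := by
  intro he; rw [he] at h; omega

lemma mem_retset_stay {A : Aut Q Sig} {k : ℕ} {σ : Sig} {m m' : ℕ} {q q₁ q' : Q}
    (op : HOp Sig)
    (hop : ∀ u : List (Sig × ℕ), applyOp op ((σ, m) :: u) = some ((σ, m') :: u))
    (hΔ : A.Δ q σ op q₁)
    (h : (q₁, q') ∈ RetSet A (k : ℕ∞) σ m') :
    (q, q') ∈ RetSet A (k : ℕ∞) σ m := by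
  obtain ⟨s₃, ds, hs₃, hch, hh, hl, hmid, hb⟩ := list_of_mem_retset h
  cases ds with
  | nil => simp at hh
  | cons d t =>
    obtain rfl : d = (q₁, (σ, m') :: s₃) := by simpa using hh
    apply mem_retset_of_list (cs := (q, (σ, m) :: s₃) :: (q₁, (σ, m') :: s₃) :: t) hs₃
    · rw [List.Chain', List.isChain_cons_cons]
      exact ⟨⟨σ, op, m, s₃, rfl, hΔ, hop s₃⟩, hch⟩
    · simp
    · rw [List.getLast?_cons_cons]
      exact hl
    · intro c hc
      rw [List.dropLast_cons₂, List.mem_cons] at hc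
      rcases hc with rfl | hc
      · exact cons_ne_self' _ _
      · exact hmid c hc
    · intro c hc
      rcases List.mem_cons.mp hc with rfl | hc
      · simp
      · have := hb c hc
        omega

lemma main_lemma {A : Aut Q Sig} {k₀ : ℕ}
    (hstab : ∀ (σ : Sig) (i : ℕ),
      RetSet A (k₀ : ℕ∞) σ i = RetSet A ((k₀ + 1 : ℕ) : ℕ∞) σ i) :
    ∀ (n : ℕ) (cs : List (Config Q Sig)), cs.length ≤ n →
    ∀ (s : List (Sig × ℕ)) (σ : Sig) (m : ℕ) (q q' : Q), s ≠ [] →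
    cs.Chain' (Step A) → cs.head? = some (q, (σ, m) :: s) →
    cs.getLast? = some (q', s) → (∀ c ∈ cs.dropLast, c.2 ≠ s) →
    (q, q') ∈ RetSet A ((k₀ + 1 : ℕ) : ℕ∞) σ m := by
  intro n
  induction n with
  | zero =>
    intro cs hlen s σ m q q' _ _ hh _ _
    cases cs with
    | nil => simp at hh
    | cons c t => simp at hlen
  | succ n ih =>
    intro cs hlen s σ m q q' hs hch hh hl hmid
    obtain ⟨c, t, rfl⟩ : ∃ c t, cs = c :: t := by
      cases cs with
      | nil => simp at hh
      | cons c t => exact ⟨c, t, rfl⟩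
    obtain rfl : c = (q, (σ, m) :: s) := by simpa using hh
    cases t with
    | nil =>
      exfalso
      have h2 : ((q, (σ, m) :: s) : Config Q Sig) = (q', s) := by simpa using hl
      exact cons_ne_self' (σ, m) s (congrArg Prod.snd h2)
    | cons c' t' =>
      rw [List.Chain', List.isChain_cons_cons] at hch
      rw [List.getLast?_cons_cons] at hl
      have hmid' : ∀ d ∈ (c' :: t').dropLast, d.2 ≠ s := by
        intro d hd
        exact hmid d (by rw [List.dropLast_cons₂, List.mem_cons]; exact Or.inr hd)
      obtain ⟨σ₁, op, n₁, rest, htop, hΔ, happ⟩ := hch.1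
      obtain ⟨⟨rfl, rfl⟩, rfl⟩ : (σ = σ₁ ∧ m = n₁) ∧ s = rest := by
        simpa [Prod.ext_iff, eq_comm, and_assoc] using htop
      cases op with
      | id =>
        have hc' : c'.2 = (σ, m) :: s :=
          (by simpa [applyOp] using happ : (σ, m) :: s = c'.2).symm
        have htail := ih (c' :: t') (by simpa using hlen) s σ m c'.1 q' hs hch.2
          (by rw [List.head?_cons]; exact congrArg some (Prod.ext rfl hc')) hl hmid'
        exact mem_retset_stay .id (fun u => by simp [applyOp]) hΔ htail
      | inc =>
        have hc' : c'.2 = (σ, m + 1) :: s :=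
          (by simpa [applyOp] using happ : (σ, m + 1) :: s = c'.2).symm
        have htail := ih (c' :: t') (by simpa using hlen) s σ (m + 1) c'.1 q' hs hch.2
          (by rw [List.head?_cons]; exact congrArg some (Prod.ext rfl hc')) hl hmid'
        exact mem_retset_stay .inc (fun u => by simp [applyOp]) hΔ htail
      | dec =>
        cases m with
        | zero => simp [applyOp] at happ
        | succ m'' =>
          have hc' : c'.2 = (σ, m'') :: s :=
            (by simpa [applyOp] using happ : (σ, m'') :: s = c'.2).symm
          have htail := ih (c' :: t') (by simpa using hlen) s σ m'' c'.1 q' hs hch.2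
            (by rw [List.head?_cons]; exact congrArg some (Prod.ext rfl hc')) hl hmid'
          exact mem_retset_stay .dec (fun u => by simp [applyOp]) hΔ htail
      | pop =>
        obtain ⟨e, s₄, rfl⟩ : ∃ e s₄, s = e :: s₄ := by
          cases s with
          | nil => exact absurd rfl hs
          | cons e s₄ => exact ⟨e, s₄, rfl⟩
        have hc' : c'.2 = e :: s₄ :=
          (by simpa [applyOp] using happ : e :: s₄ = c'.2).symm
        cases t' with
        | cons c'' t'' =>
          exact absurd hc' (hmid c' (by simp [List.dropLast_cons₂]))
        | nil =>
          obtain rfl : c' = (q', e :: s₄) := by simpa using hl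
          apply mem_retset_of_list (k := k₀ + 1)
            (cs := [(q, (σ, m) :: e :: s₄), (q', e :: s₄)]) hs
          · exact List.isChain_cons_cons.mpr
              ⟨⟨σ, .pop, m, _, rfl, hΔ, by simp [applyOp]⟩, List.isChain_singleton _⟩
          · simp
          · simp
          · intro d hd
            obtain rfl : d = (q, (σ, m) :: e :: s₄) := by simpa using hd
            exact cons_ne_self' _ _
          · intro d hd
            rcases List.mem_cons.mp hd with rfl | hd
            · simp
            · obtain rfl : d = (q', e :: s₄) := by simpa using hd
              simp only [List.length_cons]
              omega
      | push τ =>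
        have hc' : c'.2 = (τ, m) :: (σ, m) :: s :=
          (by simpa [applyOp] using happ : (τ, m) :: (σ, m) :: s = c'.2).symm
        have hs₂ : ((σ, m) :: s : List (Sig × ℕ)) ≠ [] := by simp
        obtain ⟨as, p₂, bs, heqt, hane, hmemas⟩ :=
          split_at_base (s₂ := (σ, m) :: s) hs₂ (c' :: t') [(τ, m)] c' (q', s)
            hch.2 rfl hc' (by simp) hl (by simp)
        obtain ⟨a, as', rfl⟩ : ∃ a as', as = a :: as' := by
          cases as with
          | nil => exact absurd rfl hane
          | cons a as' => exact ⟨a, as', rfl⟩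
        obtain ⟨rfl, heqt'⟩ : c' = a ∧ t' = as' ++ (p₂, (σ, m) :: s) :: bs := by
          simpa using heqt
        have hlen1 : as'.length + bs.length + 3 ≤ n + 1 := by
          have h1 := congrArg List.length heqt'
          simp only [List.length_cons, List.length_append] at h1 hlen
          omega
        -- chain pieces
        have hch2 := hch.2
        rw [heqt', show (c' :: (as' ++ (p₂, (σ, m) :: s) :: bs) : List (Config Q Sig)) =
          (c' :: as') ++ (p₂, (σ, m) :: s) :: bs from rfl, List.isChain_append] at hch2
        obtain ⟨chA, chB, hlink⟩ := hch2
        have chInner : ((c' :: as') ++ [(p₂, (σ, m) :: s)]).Chain' (Step A) := by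
          rw [List.Chain', List.isChain_append]
          refine ⟨chA, List.isChain_singleton _, ?_⟩
          intro x hx y hy
          obtain rfl : (p₂, (σ, m) :: s) = y := by simpa using hy
          exact hlink x hx _ (by simp)
        -- inner return: bound k₀ + 1 by IH, hence bound k₀ by stabilization
        have hin : (c'.1, p₂) ∈ RetSet A ((k₀ + 1 : ℕ) : ℕ∞) τ m := by
          apply ih ((c' :: as') ++ [(p₂, (σ, m) :: s)])
            (by simp only [List.length_append, List.length_cons, List.length_nil]; omega)
            ((σ, m) :: s) τ m c'.1 p₂ hs₂ chInner
          · rw [show ((c' :: as') ++ [(p₂, (σ, m) :: s)] : List (Config Q Sig)) =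
              c' :: (as' ++ [(p₂, (σ, m) :: s)]) from rfl, List.head?_cons]
            exact congrArg some (Prod.ext rfl hc')
          · exact List.getLast?_concat
          · rw [List.dropLast_concat]
            intro d hd
            obtain ⟨x, hx, hdx⟩ := hmemas d hd
            rw [hdx]
            exact append_ne_self hx
        rw [← hstab τ m] at hin
        obtain ⟨s₄, ds, hs₄, dch, dhh, dhl, dhmid, dhb⟩ := list_of_mem_retset hin
        obtain ⟨ds₂, dch₂, dhh₂, dhl₂, dlow₂, dmid₂, dhb₂⟩ :=
          transport_ret (s' := (σ, m) :: s) hs₂ dch dhh dhl dhmid dhb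
        -- tail return, bound k₀ + 1 by IH
        have hlB : ((p₂, (σ, m) :: s) :: bs).getLast? = some (q', s) := by
          rw [heqt', show (c' :: (as' ++ (p₂, (σ, m) :: s) :: bs) : List (Config Q Sig)) =
            (c' :: as') ++ (p₂, (σ, m) :: s) :: bs from rfl,
            List.getLast?_append_of_ne_nil _ (by simp)] at hl
          exact hl
        have htl : (p₂, q') ∈ RetSet A ((k₀ + 1 : ℕ) : ℕ∞) σ m := by
          apply ih ((p₂, (σ, m) :: s) :: bs) (by simp only [List.length_cons]; omega)
            s σ m p₂ q' hs chB (by simp) hlB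
          intro d hd
          apply hmid' d
          rw [heqt', show (c' :: (as' ++ (p₂, (σ, m) :: s) :: bs) : List (Config Q Sig)) =
            (c' :: as') ++ (p₂, (σ, m) :: s) :: bs from rfl, List.dropLast_append]
          simp only [List.isEmpty_cons, Bool.false_eq_true, if_false, List.cons_append,
            List.mem_cons, List.mem_append]
          exact Or.inr (Or.inr hd)
        obtain ⟨s₅, es, hs₅, ech, ehh, ehl, ehmid, ehb⟩ := list_of_mem_retset htl
        obtain ⟨es₂, ech₂, ehh₂, ehl₂, elow₂, emid₂, ehb₂⟩ :=
          transport_ret (s' := s) hs ech ehh ehl ehmid ehb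
        -- glue the pieces
        obtain ⟨e₀, es', rfl⟩ : ∃ e₀ es', es₂ = e₀ :: es' := by
          cases es₂ with
          | nil => simp at ehh₂
          | cons e₀ es' => exact ⟨e₀, es', rfl⟩
        obtain rfl : e₀ = (p₂, (σ, m) :: s) := by simpa using ehh₂
        have hes' : es' ≠ [] := by
          rintro rfl
          have h2 : ((p₂, (σ, m) :: s) : Config Q Sig) = (q', s) := by simpa using ehl₂
          exact cons_ne_self' (σ, m) s (congrArg Prod.snd h2)
        have hglue : (ds₂ ++ es').Chain' (Step A) :=
          chain'_glue dch₂ ech₂ dhl₂ (by simp)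
        have hds₂ne : ds₂ ≠ [] := by rintro rfl; simp at dhh₂
        have hgne : ds₂ ++ es' ≠ [] := by simp [hds₂ne]
        have hesl : es'.getLast? = some (q', s) := by
          cases es' with
          | nil => exact absurd rfl hes'
          | cons a l => rw [← List.getLast?_cons_cons (a := (p₂, (σ, m) :: s))]; exact ehl₂
        apply mem_retset_of_list (k := k₀ + 1)
          (cs := (q, (σ, m) :: s) :: (ds₂ ++ es')) hs
        · rw [List.Chain', List.isChain_cons]
          refine ⟨?_, hglue⟩
          intro y hy
          rw [List.head?_append, dhh₂] at hy
          obtain rfl : (c'.1, (τ, m) :: (σ, m) :: s) = y := by simpa using hy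
          exact ⟨σ, .push τ, m, s, rfl, hΔ, by simp [applyOp]⟩
        · simp
        · rw [show ((q, (σ, m) :: s) :: (ds₂ ++ es') : List (Config Q Sig)) =
            [(q, (σ, m) :: s)] ++ (ds₂ ++ es') from rfl,
            List.getLast?_append_of_ne_nil _ hgne, List.getLast?_append_of_ne_nil _ hes']
          exact hesl
        · intro d hd
          rw [show ((q, (σ, m) :: s) :: (ds₂ ++ es') : List (Config Q Sig)) =
            [(q, (σ, m) :: s)] ++ (ds₂ ++ es') from rfl, List.dropLast_append] at hd
          have : d = (q, (σ, m) :: s) ∨ d ∈ (ds₂ ++ es').dropLast := by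
            simpa [hgne] using hd
          rcases this with rfl | hd2
          · exact cons_ne_self' _ _
          · rw [List.dropLast_append] at hd2
            simp only [List.isEmpty_iff, hes', if_false, List.mem_append] at hd2
            rcases hd2 with hd3 | hd3
            · have := dlow₂ d hd3
              simp only [List.length_cons] at this
              exact ne_of_length_gt' (by omega)
            · apply emid₂
              cases es' with
              | nil => exact absurd rfl hes'
              | cons b l =>
                rw [List.dropLast_cons₂, List.mem_cons]
                exact Or.inr hd3
        · intro d hd
          rcases List.mem_cons.mp hd with rfl | hd2
          · simp only [List.length_cons]
            omega
          · rcases List.mem_append.mp hd2 with hd3 | hd3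
            · have := dhb₂ d hd3
              simp only [List.length_cons] at this
              omega
            · have := ehb₂ d (List.mem_cons_of_mem _ hd3)
              omega

lemma retset_mono {A : Aut Q Sig} {j k : ℕ∞} (hjk : j ≤ k) {σ : Sig} {m : ℕ} :
    RetSet A j σ m ⊆ RetSet A k σ m := by
  rintro p ⟨s, L, cfg, lab, hs, hrun, h0, hL, hm, hb⟩
  exact ⟨s, L, cfg, lab, hs, hrun, h0, hL, hm,
    fun i hi => le_trans (hb i hi) (add_le_add_right hjk _)⟩

end HOCA

/-- In a 2-HOCA without zero-test, if `k₀` satisfies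
`Ret_{k₀}((σ,i)) = Ret_{k₀+1}((σ,i))` for all `σ` and all `i`, then
`Ret_k((σ,i)) = Ret_{k₀}((σ,i))` for all `k ≥ k₀`, all `σ`, and all `i`. -/
theorem hoca_ret_stabilizes_in_height {Q Sig : Type} [Fintype Q] [Fintype Sig]
    (A : HOCA.Aut Q Sig) (k₀ : ℕ)
    (hstab : ∀ (σ : Sig) (i : ℕ),
      HOCA.RetSet A (k₀ : ℕ∞) σ i = HOCA.RetSet A ((k₀ + 1 : ℕ) : ℕ∞) σ i) :
    ∀ k : ℕ, k₀ ≤ k → ∀ (σ : Sig) (i : ℕ),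
      HOCA.RetSet A (k : ℕ∞) σ i = HOCA.RetSet A (k₀ : ℕ∞) σ i := by
  intro k hk σ i
  apply Set.Subset.antisymm
  · intro p hp
    obtain ⟨s, cs, hs, hch, hh, hl, hmid, hb⟩ := HOCA.list_of_mem_retset hp
    have hmem := HOCA.main_lemma hstab cs.length cs le_rfl s σ i p.1 p.2 hs hch hh hl hmid
    rw [← hstab σ i] at hmem
    exact hmem
  · exact HOCA.retset_mono (by exact_mod_cast hk)
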